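/- For K-linear maps f : A → B and g : B → C with f(1)=1 and g(1)=1 between commutative unital K-algebras, the cumulants of the composite satisfy, for every n ≥ 1 and all a_1,…,a_n ∈ A: κ(g∘f)_n(a_1,…,a_n) = Σ κ(g)_k(κ(f)_{|I_1|}((a_i)_{i∈I_1}),…,κ(f)_{|I_k|}((a_i)_{i∈I_k})), the sum running over all partitions {I_1,…,I_k} of {1,…,n} into nonempty blocks. (This is the Taylor-coefficient form of the identity κ(g∘f) = κ(g)∘κ(f).) -/

import Mathlib

open Finset

set_option maxHeartbeats 1000000

section PartsMachinery
variable {α : Type*} [DecidableEq α]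

def parts (t : Finset α) : Finset (Finset (Finset α)) :=
  (t.powerset.powerset).filter fun P =>
    (∀ s ∈ P, s.Nonempty) ∧ (∀ s ∈ P, ∀ u ∈ P, s ≠ u → s ∩ u = ∅) ∧ P.sup id = t

lemma mem_parts {t : Finset α} {P : Finset (Finset α)} :
    P ∈ parts t ↔ (∀ s ∈ P, s.Nonempty) ∧ (∀ s ∈ P, ∀ u ∈ P, s ≠ u → s ∩ u = ∅) ∧ P.sup id = t := by
  constructor
  · intro h; exact (mem_filter.1 h).2
  · intro h
    refine mem_filter.2 ⟨?_, h⟩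
    simp only [mem_powerset]
    intro s hs
    simp only [mem_powerset]
    rw [← h.2.2]
    exact le_sup (f := id) hs

lemma parts_nonempty {t : Finset α} {P : Finset (Finset α)} (hP : P ∈ parts t) (s : Finset α)
    (hs : s ∈ P) : s.Nonempty := (mem_parts.1 hP).1 s hs

lemma parts_disj {t : Finset α} {P : Finset (Finset α)} (hP : P ∈ parts t) {s u : Finset α}
    (hs : s ∈ P) (hu : u ∈ P) (hne : s ≠ u) : s ∩ u = ∅ := (mem_parts.1 hP).2.1 s hs u hu hne

lemma parts_sup {t : Finset α} {P : Finset (Finset α)} (hP : P ∈ parts t) : P.sup id = t :=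
  (mem_parts.1 hP).2.2

lemma parts_subset {t : Finset α} {P : Finset (Finset α)} (hP : P ∈ parts t) {s : Finset α}
    (hs : s ∈ P) : s ⊆ t := by
  rw [← parts_sup hP]; exact le_sup (f := id) hs

lemma mem_sup_parts {t : Finset α} {P : Finset (Finset α)} (hP : P ∈ parts t) {x : α}
    (hx : x ∈ t) : ∃ s ∈ P, x ∈ s := by
  rw [← parts_sup hP] at hx
  simpa using (Finset.mem_sup.1 hx)

lemma parts_pairwiseDisjoint {t : Finset α} {P : Finset (Finset α)} (hP : P ∈ parts t) :
    (P : Set (Finset α)).PairwiseDisjoint id := by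
  intro s hs u hu hne
  simp only [Function.onFun, id_eq, disjoint_iff_inter_eq_empty]
  exact parts_disj hP hs hu hne

lemma prod_parts {β : Type*} [CommMonoid β] {t : Finset α} {P : Finset (Finset α)}
    (hP : P ∈ parts t) (h : α → β) : ∏ i ∈ t, h i = ∏ s ∈ P, ∏ i ∈ s, h i := by
  rw [← parts_sup hP, Finset.sup_eq_biUnion, Finset.prod_biUnion]
  · simp
  · exact fun s hs u hu hne => parts_pairwiseDisjoint hP hs hu hne

lemma parts_empty : parts (∅ : Finset α) = {∅} := by
  ext P
  simp only [mem_parts, Finset.mem_singleton]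
  constructor
  · rintro ⟨h1, _, h3⟩
    by_contra hne
    obtain ⟨s, hs⟩ := Finset.nonempty_iff_ne_empty.2 hne
    obtain ⟨x, hx⟩ := h1 s hs
    have : x ∈ P.sup id := Finset.mem_sup.2 ⟨s, hs, hx⟩
    rw [h3] at this; exact absurd this (Finset.notMem_empty x)
  · rintro rfl; simp

lemma parts_ne_empty {t : Finset α} (ht : t.Nonempty) {P : Finset (Finset α)}
    (hP : P ∈ parts t) : P.Nonempty := by
  obtain ⟨x, hx⟩ := ht
  obtain ⟨s, hs, _⟩ := mem_sup_parts hP hx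
  exact ⟨s, hs⟩

lemma singleton_mem_parts {t : Finset α} (ht : t.Nonempty) : {t} ∈ parts t := by
  rw [mem_parts]
  refine ⟨?_, ?_, ?_⟩ <;> simp [ht]

/-- partitions of `t` with exactly one block: just `{t}`. -/
lemma parts_card_one {t : Finset α} (ht : t.Nonempty) {P : Finset (Finset α)}
    (hP : P ∈ parts t) (h1 : P.card = 1) : P = {t} := by
  obtain ⟨s, hs⟩ := Finset.card_eq_one.1 h1
  subst hs
  have := parts_sup hP
  simp only [Finset.sup_singleton, id_eq] at this
  rw [this]

/-- The block of `P` containing `x`. -/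
def blockOf (x : α) (P : Finset (Finset α)) : Finset α :=
  P.sup fun s => if x ∈ s then s else ∅

lemma blockOf_eq {t : Finset α} {P : Finset (Finset α)} (hP : P ∈ parts t) {s₀ : Finset α}
    (hs₀ : s₀ ∈ P) (hx : x ∈ s₀) : blockOf x P = s₀ := by
  apply le_antisymm
  · apply Finset.sup_le
    intro s hs
    by_cases h : x ∈ s
    · have : s = s₀ := by
        by_contra hne
        have := parts_disj hP hs hs₀ hne
        have : x ∈ s ∩ s₀ := Finset.mem_inter.2 ⟨h, hx⟩
        simp_all
      subst this; simp [hx]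
    · simp [h]
  · have := Finset.le_sup (f := fun s => if x ∈ s then s else ∅) hs₀
    simp [hx] at this
    exact this

lemma block_not_mem_parts_sdiff {t s : Finset α} {P' : Finset (Finset α)}
    (hP' : P' ∈ parts (t \ s)) (hx : x ∈ s) : s ∉ P' := by
  intro hs
  have := parts_subset hP' hs hx
  simp [Finset.mem_sdiff, hx] at this

lemma insert_mem_parts {t s : Finset α} (hst : s ⊆ t) (hs : s.Nonempty)
    {P' : Finset (Finset α)} (hP' : P' ∈ parts (t \ s)) : insert s P' ∈ parts t := by
  rw [mem_parts]
  refine ⟨?_, ?_, ?_⟩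
  · intro u hu
    rcases Finset.mem_insert.1 hu with rfl | hu
    · exact hs
    · exact parts_nonempty hP' u hu
  · have key : ∀ u ∈ P', s ∩ u = ∅ := by
      intro u hu
      have husub := parts_subset hP' hu
      rw [Finset.eq_empty_iff_forall_notMem]
      intro y hy
      have h1 := Finset.mem_inter.1 hy
      have := husub h1.2
      simp [Finset.mem_sdiff, h1.1] at this
    intro u hu v hv hne
    rcases Finset.mem_insert.1 hu with hu1 | hu2
    · rcases Finset.mem_insert.1 hv with hv1 | hv2
      · exact absurd (hu1.trans hv1.symm) hne
      · rw [hu1]; exact key v hv2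
    · rcases Finset.mem_insert.1 hv with hv1 | hv2
      · rw [hv1, Finset.inter_comm]; exact key u hu2
      · exact parts_disj hP' hu2 hv2 hne
  · rw [Finset.sup_insert, parts_sup hP']
    simpa using Finset.union_sdiff_of_subset hst

lemma erase_mem_parts {t : Finset α} {P : Finset (Finset α)} (hP : P ∈ parts t) {s₀ : Finset α}
    (hs₀ : s₀ ∈ P) : P.erase s₀ ∈ parts (t \ s₀) := by
  rw [mem_parts]
  refine ⟨fun u hu => parts_nonempty hP u (Finset.mem_of_mem_erase hu),
    fun u hu v hv hne => parts_disj hP (Finset.mem_of_mem_erase hu) (Finset.mem_of_mem_erase hv) hne, ?_⟩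
  apply Finset.Subset.antisymm
  · intro y hy
    obtain ⟨u, hu, hyu⟩ := Finset.mem_sup.1 hy
    simp only [id_eq] at hyu
    have hne := Finset.ne_of_mem_erase hu
    have hu' := Finset.mem_of_mem_erase hu
    have hd := parts_disj hP hu' hs₀ hne
    refine Finset.mem_sdiff.2 ⟨parts_subset hP hu' hyu, fun hy0 => ?_⟩
    have : y ∈ u ∩ s₀ := Finset.mem_inter.2 ⟨hyu, hy0⟩
    simp_all
  · intro y hy
    obtain ⟨hy1, hy2⟩ := Finset.mem_sdiff.1 hy
    obtain ⟨u, hu, hyu⟩ := mem_sup_parts hP hy1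
    have hne : u ≠ s₀ := fun h => hy2 (h ▸ hyu)
    exact Finset.mem_sup.2 ⟨u, Finset.mem_erase.2 ⟨hne, hu⟩, hyu⟩

/-- T3: decompose sum over partitions by the block containing `x`. -/
lemma block_decomp {M : Type*} [AddCommMonoid M] {t : Finset α} {x : α} (hx : x ∈ t)
    (F : Finset (Finset α) → M) :
    ∑ P ∈ parts t, F P =
      ∑ p ∈ (t.powerset.filter fun s => x ∈ s).sigma (fun s => parts (t \ s)),
        F (insert p.1 p.2) := by
  apply Finset.sum_nbij' (i := fun P => (⟨blockOf x P, P.erase (blockOf x P)⟩ :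
      (_ : Finset α) × Finset (Finset α))) (j := fun p => insert p.1 p.2)
  · intro P hP
    obtain ⟨s₀, hs₀, hxs₀⟩ := mem_sup_parts hP hx
    rw [blockOf_eq hP hs₀ hxs₀]
    exact Finset.mem_sigma.2 ⟨Finset.mem_filter.2 ⟨Finset.mem_powerset.2 (parts_subset hP hs₀), hxs₀⟩,
      erase_mem_parts hP hs₀⟩
  · intro p hp
    obtain ⟨h1, h2⟩ := Finset.mem_sigma.1 hp
    obtain ⟨h1a, h1b⟩ := Finset.mem_filter.1 h1
    exact insert_mem_parts (Finset.mem_powerset.1 h1a) ⟨x, h1b⟩ h2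
  · intro P hP
    obtain ⟨s₀, hs₀, hxs₀⟩ := mem_sup_parts hP hx
    rw [blockOf_eq hP hs₀ hxs₀]
    exact Finset.insert_erase hs₀
  · intro p hp
    obtain ⟨h1, h2⟩ := Finset.mem_sigma.1 hp
    obtain ⟨h1a, h1b⟩ := Finset.mem_filter.1 h1
    have hmem : insert p.1 p.2 ∈ parts t :=
      insert_mem_parts (Finset.mem_powerset.1 h1a) ⟨x, h1b⟩ h2
    have hb : blockOf x (insert p.1 p.2) = p.1 :=
      blockOf_eq hmem (Finset.mem_insert_self _ _) h1b
    have hnm : p.1 ∉ p.2 := block_not_mem_parts_sdiff h2 h1b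
    ext1
    · exact hb
    · rw [hb]
      exact heq_of_eq (Finset.erase_insert hnm)
  · intro P hP
    obtain ⟨s₀, hs₀, hxs₀⟩ := mem_sup_parts hP hx
    rw [blockOf_eq hP hs₀ hxs₀, Finset.insert_erase hs₀]

/-- Möbius coefficient. -/
def cf (k : ℕ) : ℤ := (-1) ^ (k - 1) * (k - 1).factorial

lemma cf_one : cf 1 = 1 := by simp [cf]

lemma cf_step (m : ℕ) : cf (m + 2) + (m + 1) * cf (m + 1) = 0 := by
  have h2 : m + 2 - 1 = m + 1 := rfl
  simp only [cf, h2, Nat.add_sub_cancel]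
  rw [Nat.factorial_succ]
  push_cast
  ring

/-- The core identity: the Möbius function of the partition lattice sums to zero. -/
lemma core_identity : ∀ n : ℕ, ∀ t : Finset α, t.card = n → t.Nonempty →
    (∑ P ∈ parts t, ∏ s ∈ P, cf s.card) = if t.card = 1 then 1 else 0 := by
  intro n
  induction n using Nat.strong_induction_on with
  | _ n IH =>
    intro t hcard ht
    obtain ⟨x, hx⟩ := ht
    rw [block_decomp hx, Finset.sum_sigma]
    have inner : ∀ s ∈ t.powerset.filter (fun s => x ∈ s),
        ∑ P' ∈ parts (t \ s), ∏ u ∈ insert s P', cf u.card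
          = cf s.card * (if (t \ s).card ≤ 1 then 1 else 0) := by
      intro s hs
      obtain ⟨hs1, hs2⟩ := Finset.mem_filter.1 hs
      have hsub := Finset.mem_powerset.1 hs1
      have hins : ∀ P' ∈ parts (t \ s), ∏ u ∈ insert s P', cf u.card
          = cf s.card * ∏ u ∈ P', cf u.card := by
        intro P' hP'
        rw [Finset.prod_insert (block_not_mem_parts_sdiff hP' hs2)]
      rw [Finset.sum_congr rfl hins, ← Finset.mul_sum]
      congr 1
      rcases Finset.eq_empty_or_nonempty (t \ s) with he | hne
      · rw [he, parts_empty]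
        simp
      · have hlt : (t \ s).card < n := by
          rw [← hcard]
          exact Finset.card_lt_card (Finset.sdiff_ssubset hsub ⟨x, hs2⟩)
        rw [IH _ hlt _ rfl hne]
        have hc1 : 1 ≤ (t \ s).card := Finset.card_pos.2 hne
        exact if_congr (by omega) rfl rfl
    rw [Finset.sum_congr rfl inner]
    have step1 : ∑ s ∈ t.powerset.filter (fun s => x ∈ s),
        cf s.card * (if (t \ s).card ≤ 1 then 1 else 0)
        = ∑ s ∈ t.powerset.filter (fun s => x ∈ s ∧ (t \ s).card ≤ 1), cf s.card := by
      conv_rhs => rw [← Finset.filter_filter, Finset.sum_filter]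
      apply Finset.sum_congr rfl
      intro s hs
      split <;> simp
    rw [step1]
    have hset : t.powerset.filter (fun s => x ∈ s ∧ (t \ s).card ≤ 1)
        = insert t ((t.erase x).image t.erase) := by
      ext s
      simp only [Finset.mem_filter, Finset.mem_powerset, Finset.mem_insert, Finset.mem_image,
        Finset.mem_erase]
      constructor
      · rintro ⟨hsub, hxs, hle⟩
        rcases Finset.eq_empty_or_nonempty (t \ s) with he | hne
        · left
          apply Finset.Subset.antisymm hsub
          intro z hz
          by_contra hzs
          have : z ∈ t \ s := Finset.mem_sdiff.2 ⟨hz, hzs⟩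
          simp [he] at this
        · right
          have h1 : (t \ s).card = 1 := le_antisymm hle (Finset.card_pos.2 hne)
          obtain ⟨y, hy⟩ := Finset.card_eq_one.1 h1
          have hyt : y ∈ t ∧ y ∉ s := by
            have : y ∈ t \ s := by rw [hy]; exact Finset.mem_singleton_self y
            exact Finset.mem_sdiff.1 this
          refine ⟨y, ⟨fun hxy => hyt.2 (hxy ▸ hxs), hyt.1⟩, ?_⟩
          apply Finset.Subset.antisymm
          · intro z hz
            obtain ⟨hz1, hz2⟩ := Finset.mem_erase.1 hz
            by_contra hzs
            have : z ∈ t \ s := Finset.mem_sdiff.2 ⟨hz2, hzs⟩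
            rw [hy] at this
            exact hz1 (Finset.mem_singleton.1 this)
          · intro z hz
            exact Finset.mem_erase.2 ⟨fun h => hyt.2 (h ▸ hz), hsub hz⟩
      · rintro (rfl | ⟨y, ⟨hyx, hyt⟩, rfl⟩)
        · simp [hx]
        · refine ⟨Finset.erase_subset _ _, Finset.mem_erase.2 ⟨fun h => hyx h.symm, hx⟩, ?_⟩
          have : t \ t.erase y = {y} := by
            ext z
            simp only [Finset.mem_sdiff, Finset.mem_erase, Finset.mem_singleton]
            constructor
            · rintro ⟨hz1, hz2⟩
              by_contra hne
              exact hz2 ⟨hne, hz1⟩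
            · rintro rfl
              exact ⟨hyt, fun h => h.1 rfl⟩
          rw [this]
          simp
    rw [hset]
    have htni : t ∉ (t.erase x).image t.erase := by
      intro h
      obtain ⟨y, hy, hyy⟩ := Finset.mem_image.1 h
      have hyt : y ∈ t := (Finset.mem_erase.1 hy).2
      have := Finset.card_erase_of_mem hyt
      rw [hyy, hcard] at this
      have hn1 : 1 ≤ n := by rw [← hcard]; exact Finset.card_pos.2 ⟨x, hx⟩
      omega
    rw [Finset.sum_insert htni]
    have hinj : Set.InjOn t.erase (t.erase x) := fun y hy z hz h => by
      by_contra hne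
      have hyz : y ∈ t.erase z := Finset.mem_erase.2 ⟨hne, (Finset.mem_erase.1 (by exact hy : y ∈ t.erase x)).2⟩
      rw [← h] at hyz
      exact (Finset.mem_erase.1 hyz).1 rfl
    rw [Finset.sum_image hinj]
    have hterm : ∀ y ∈ t.erase x, cf (t.erase y).card = cf (n - 1) := by
      intro y hy
      rw [Finset.card_erase_of_mem (Finset.mem_erase.1 hy).2, hcard]
    rw [Finset.sum_congr rfl hterm, Finset.sum_const, Finset.card_erase_of_mem hx, hcard]
    have hn1 : 1 ≤ n := by rw [← hcard]; exact Finset.card_pos.2 ⟨x, hx⟩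
    rcases Nat.lt_or_ge n 2 with h2 | h2
    · have hn : n = 1 := by omega
      subst hn
      simp [cf_one]
    · obtain ⟨m, rfl⟩ : ∃ m, n = m + 2 := ⟨n - 2, by omega⟩
      have hsm : (m + 2 - 1) • cf (m + 2 - 1) = (m + 1 : ℤ) * cf (m + 1) := by
        simp only [Nat.add_sub_cancel, nsmul_eq_mul]
        push_cast
        ring
      rw [hsm]
      have hne2 : ¬ (m + 2 = 1) := by omega
      rw [if_neg hne2]
      exact cf_step m

lemma disj_elem {t : Finset α} {P : Finset (Finset α)} (hP : P ∈ parts t) {s u : Finset α}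
    (hs : s ∈ P) (hu : u ∈ P) {x : α} (hxs : x ∈ s) (hxu : x ∈ u) : s = u := by
  by_contra hne
  have := parts_disj hP hs hu hne
  have hx : x ∈ s ∩ u := Finset.mem_inter.2 ⟨hxs, hxu⟩
  simp_all

/-- H1: if `Q` refines `R` then restricting `Q` to a block `u` of `R` gives a partition of `u`. -/
lemma filter_mem_parts {t : Finset α} {Q R : Finset (Finset α)} (hQ : Q ∈ parts t)
    (hR : R ∈ parts t) (href : ∀ s ∈ Q, ∃ u ∈ R, s ⊆ u) {u : Finset α} (hu : u ∈ R) :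
    Q.filter (· ⊆ u) ∈ parts u := by
  rw [mem_parts]
  refine ⟨fun s hs => parts_nonempty hQ s (Finset.mem_filter.1 hs).1,
    fun s hs v hv hne => parts_disj hQ (Finset.mem_filter.1 hs).1 (Finset.mem_filter.1 hv).1 hne,
    ?_⟩
  apply Finset.Subset.antisymm
  · intro x hx
    obtain ⟨s, hs, hxs⟩ := Finset.mem_sup.1 hx
    exact (Finset.mem_filter.1 hs).2 hxs
  · intro x hxu
    obtain ⟨s, hsQ, hxs⟩ := mem_sup_parts hQ (parts_subset hR hu hxu)
    obtain ⟨u', hu', hsu'⟩ := href s hsQ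
    have : u' = u := disj_elem hR hu' hu (hsu' hxs) hxu
    subst this
    exact Finset.mem_sup.2 ⟨s, Finset.mem_filter.2 ⟨hsQ, hsu'⟩, hxs⟩

/-- H4: blocks of a partition of a partition have nonempty sups. -/
lemma sup_nonempty {t : Finset α} {Q : Finset (Finset α)} {P' : Finset (Finset (Finset α))}
    {B : Finset (Finset α)}
    (hQ : Q ∈ parts t) (hP' : P' ∈ parts Q) (hB : B ∈ P') : (B.sup id).Nonempty := by
  obtain ⟨s, hs⟩ := parts_nonempty hP' B hB
  obtain ⟨x, hx⟩ := parts_nonempty hQ s (parts_subset hP' hB hs)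
  exact ⟨x, Finset.mem_sup.2 ⟨s, hs, hx⟩⟩

/-- H2: distinct blocks of a partition of a partition have disjoint sups. -/
lemma sup_disj {t : Finset α} {Q : Finset (Finset α)} {P' : Finset (Finset (Finset α))}
    {B B' : Finset (Finset α)}
    (hQ : Q ∈ parts t) (hP' : P' ∈ parts Q) (hB : B ∈ P') (hB' : B' ∈ P') (hne : B ≠ B') :
    (B.sup id) ∩ (B'.sup id) = ∅ := by
  rw [Finset.eq_empty_iff_forall_notMem]
  intro x hx
  obtain ⟨hx1, hx2⟩ := Finset.mem_inter.1 hx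
  obtain ⟨s, hs, hxs⟩ := Finset.mem_sup.1 hx1
  obtain ⟨s', hs', hxs'⟩ := Finset.mem_sup.1 hx2
  have hseq : s = s' := disj_elem hQ (parts_subset hP' hB hs) (parts_subset hP' hB' hs') hxs hxs'
  subst hseq
  have : B = B' := disj_elem hP' hB hB' hs hs'
  exact hne this

lemma sup_inj_on {t : Finset α} {Q : Finset (Finset α)} {P' : Finset (Finset (Finset α))}
    (hQ : Q ∈ parts t)
    (hP' : P' ∈ parts Q) {B B' : Finset (Finset α)} (hB : B ∈ P') (hB' : B' ∈ P')
    (h : B.sup id = B'.sup id) : B = B' := by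
  by_contra hne
  have hd := sup_disj hQ hP' hB hB' hne
  obtain ⟨x, hx⟩ := sup_nonempty hQ hP' hB
  have : x ∈ B.sup id ∩ B'.sup id := Finset.mem_inter.2 ⟨hx, h ▸ hx⟩
  simp_all

/-- H3 -/
lemma filter_sup_eq {t : Finset α} {Q : Finset (Finset α)} {P' : Finset (Finset (Finset α))}
    (hQ : Q ∈ parts t)
    (hP' : P' ∈ parts Q) {B : Finset (Finset α)} (hB : B ∈ P') :
    Q.filter (· ⊆ B.sup id) = B := by
  apply Finset.Subset.antisymm
  · intro s hs
    obtain ⟨hsQ, hssup⟩ := Finset.mem_filter.1 hs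
    obtain ⟨x, hx⟩ := parts_nonempty hQ s hsQ
    have hxB : x ∈ B.sup id := hssup hx
    -- s belongs to some block B' of P'
    have hsQ' : s ∈ P'.sup id := by rw [parts_sup hP']; exact hsQ
    obtain ⟨B', hB', hsB'⟩ := Finset.mem_sup.1 hsQ'
    have hxB' : x ∈ B'.sup id := Finset.mem_sup.2 ⟨s, hsB', hx⟩
    have : B = B' := by
      by_contra hne
      have hd := sup_disj hQ hP' hB hB' hne
      have : x ∈ B.sup id ∩ B'.sup id := Finset.mem_inter.2 ⟨hxB, hxB'⟩
      simp_all
    subst this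
    exact hsB'
  · intro s hs
    exact Finset.mem_filter.2 ⟨parts_subset hP' hB hs, Finset.le_sup (f := id) hs⟩

/-- T2: sum over partitions of the blocks of `Q` = sum over coarsenings of `Q`. -/
lemma coarsen_bij {M : Type*} [AddCommMonoid M] {t : Finset α} {Q : Finset (Finset α)}
    (hQ : Q ∈ parts t) (F : Finset (Finset α) → M) :
    ∑ P' ∈ parts Q, F (P'.image fun B => B.sup id)
      = ∑ R ∈ (parts t).filter (fun R => ∀ s ∈ Q, ∃ u ∈ R, s ⊆ u), F R := by
  apply Finset.sum_nbij' (i := fun P' => P'.image fun B => B.sup id)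
    (j := fun R => R.image fun u => Q.filter (· ⊆ u))
  · -- i maps into coarsenings
    intro P' hP'
    refine Finset.mem_filter.2 ⟨?_, ?_⟩
    · rw [mem_parts]
      refine ⟨?_, ?_, ?_⟩
      · intro r hr
        obtain ⟨B, hB, rfl⟩ := Finset.mem_image.1 hr
        exact sup_nonempty hQ hP' hB
      · intro r hr r' hr' hne
        obtain ⟨B, hB, rfl⟩ := Finset.mem_image.1 hr
        obtain ⟨B', hB', rfl⟩ := Finset.mem_image.1 hr'
        exact sup_disj hQ hP' hB hB' (fun h => hne (h ▸ rfl))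
      · rw [Finset.sup_image]
        apply Finset.Subset.antisymm
        · intro x hx
          obtain ⟨B, hB, hxB⟩ := Finset.mem_sup.1 hx
          obtain ⟨s, hs, hxs⟩ := Finset.mem_sup.1 (by exact hxB : x ∈ B.sup id)
          exact parts_subset hQ (parts_subset hP' hB hs) hxs
        · intro x hx
          obtain ⟨s, hsQ, hxs⟩ := mem_sup_parts hQ hx
          have hsQ' : s ∈ P'.sup id := by rw [parts_sup hP']; exact hsQ
          obtain ⟨B, hB, hsB⟩ := Finset.mem_sup.1 hsQ'
          exact Finset.mem_sup.2 ⟨B, hB, Finset.mem_sup.2 ⟨s, hsB, hxs⟩⟩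
    · intro s hsQ
      have hsQ' : s ∈ P'.sup id := by rw [parts_sup hP']; exact hsQ
      obtain ⟨B, hB, hsB⟩ := Finset.mem_sup.1 hsQ'
      exact ⟨B.sup id, Finset.mem_image_of_mem _ hB, Finset.le_sup (f := id) hsB⟩
  · -- j maps into parts Q
    intro R hR
    obtain ⟨hRp, href⟩ := Finset.mem_filter.1 hR
    rw [mem_parts]
    refine ⟨?_, ?_, ?_⟩
    · intro B hB
      obtain ⟨u, hu, rfl⟩ := Finset.mem_image.1 hB
      have := filter_mem_parts hQ hRp href hu
      have hsup := parts_sup this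
      obtain ⟨x, hx⟩ := parts_nonempty hRp u hu
      rw [← hsup] at hx
      obtain ⟨s, hs, _⟩ := Finset.mem_sup.1 hx
      exact ⟨s, hs⟩
    · intro B hB B' hB' hne
      obtain ⟨u, hu, rfl⟩ := Finset.mem_image.1 hB
      obtain ⟨u', hu', rfl⟩ := Finset.mem_image.1 hB'
      have hune : u ≠ u' := fun h => hne (h ▸ rfl)
      rw [Finset.eq_empty_iff_forall_notMem]
      intro s hs
      obtain ⟨h1, h2⟩ := Finset.mem_inter.1 hs
      obtain ⟨x, hx⟩ := parts_nonempty hQ s (Finset.mem_filter.1 h1).1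
      have := parts_disj hRp hu hu' hune
      have : x ∈ u ∩ u' :=
        Finset.mem_inter.2 ⟨(Finset.mem_filter.1 h1).2 hx, (Finset.mem_filter.1 h2).2 hx⟩
      simp_all
    · rw [Finset.sup_image]
      apply Finset.Subset.antisymm
      · intro s hs
        obtain ⟨u, hu, hsu⟩ := Finset.mem_sup.1 hs
        exact (Finset.mem_filter.1 (by exact hsu : s ∈ Q.filter (· ⊆ u))).1
      · intro s hsQ
        obtain ⟨u, hu, hsu⟩ := href s hsQ
        exact Finset.mem_sup.2 ⟨u, hu, Finset.mem_filter.2 ⟨hsQ, hsu⟩⟩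
  · -- left inverse
    intro P' hP'
    rw [Finset.image_image]
    have : ∀ B ∈ P', (Q.filter (· ⊆ B.sup id)) = B := fun B hB => filter_sup_eq hQ hP' hB
    calc P'.image ((fun u => Q.filter (· ⊆ u)) ∘ fun B => B.sup id)
        = P'.image id := Finset.image_congr (fun B hB => this B hB)
      _ = P' := Finset.image_id
  · -- right inverse
    intro R hR
    obtain ⟨hRp, href⟩ := Finset.mem_filter.1 hR
    rw [Finset.image_image]
    have : ∀ u ∈ R, ((Q.filter (· ⊆ u)).sup id) = u := fun u hu =>
      parts_sup (filter_mem_parts hQ hRp href hu)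
    calc R.image ((fun B => B.sup id) ∘ fun u => Q.filter (· ⊆ u))
        = R.image id := Finset.image_congr (fun u hu => this u hu)
      _ = R := Finset.image_id
  · intro P' hP'
    rfl

section refine
variable {t : Finset α} {R : Finset (Finset α)}

/-- The union of a family of partitions of the blocks of `R`. -/
def unionPi (R : Finset (Finset α)) (q : ∀ u ∈ R, Finset (Finset α)) : Finset (Finset α) :=
  R.attach.biUnion fun u => q u.1 u.2

lemma mem_unionPi {q : ∀ u ∈ R, Finset (Finset α)} {s : Finset α} :
    s ∈ unionPi R q ↔ ∃ u, ∃ hu : u ∈ R, s ∈ q u hu := by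
  simp [unionPi, Finset.mem_biUnion]

lemma unionPi_mem_parts (hR : R ∈ parts t) {q : ∀ u ∈ R, Finset (Finset α)}
    (hq : ∀ u (hu : u ∈ R), q u hu ∈ parts u) : unionPi R q ∈ parts t := by
  rw [mem_parts]
  refine ⟨?_, ?_, ?_⟩
  · intro s hs
    obtain ⟨u, hu, hsq⟩ := mem_unionPi.1 hs
    exact parts_nonempty (hq u hu) s hsq
  · intro s hs s' hs' hne
    obtain ⟨u, hu, hsq⟩ := mem_unionPi.1 hs
    obtain ⟨u', hu', hsq'⟩ := mem_unionPi.1 hs'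
    by_cases huu : u = u'
    · subst huu
      exact parts_disj (hq u hu) hsq hsq' hne
    · have hd := parts_disj hR hu hu' huu
      rw [Finset.eq_empty_iff_forall_notMem]
      intro x hx
      obtain ⟨h1, h2⟩ := Finset.mem_inter.1 hx
      have : x ∈ u ∩ u' := Finset.mem_inter.2
        ⟨parts_subset (hq u hu) hsq h1, parts_subset (hq u' hu') hsq' h2⟩
      simp_all
  · apply Finset.Subset.antisymm
    · intro x hx
      obtain ⟨s, hs, hxs⟩ := Finset.mem_sup.1 hx
      obtain ⟨u, hu, hsq⟩ := mem_unionPi.1 hs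
      exact parts_subset hR hu (parts_subset (hq u hu) hsq hxs)
    · intro x hx
      obtain ⟨u, hu, hxu⟩ := mem_sup_parts hR hx
      obtain ⟨s, hsq, hxs⟩ := mem_sup_parts (hq u hu) hxu
      exact Finset.mem_sup.2 ⟨s, mem_unionPi.2 ⟨u, hu, hsq⟩, hxs⟩

lemma unionPi_filter (hR : R ∈ parts t) {q : ∀ u ∈ R, Finset (Finset α)}
    (hq : ∀ u (hu : u ∈ R), q u hu ∈ parts u) {u : Finset α} (hu : u ∈ R) :
    (unionPi R q).filter (· ⊆ u) = q u hu := by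
  apply Finset.Subset.antisymm
  · intro s hs
    obtain ⟨hs1, hs2⟩ := Finset.mem_filter.1 hs
    obtain ⟨u', hu', hsq⟩ := mem_unionPi.1 hs1
    obtain ⟨x, hx⟩ := parts_nonempty (hq u' hu') s hsq
    have : u = u' := disj_elem hR hu hu' (hs2 hx) (parts_subset (hq u' hu') hsq hx)
    subst this
    exact hsq
  · intro s hs
    exact Finset.mem_filter.2 ⟨mem_unionPi.2 ⟨u, hu, hs⟩, parts_subset (hq u hu) hs⟩

/-- T1: sum over families of partitions of the blocks of `R` = sum over refinements of `R`. -/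
lemma refine_bij {M : Type*} [AddCommMonoid M] (hR : R ∈ parts t)
    (F : Finset (Finset α) → M) :
    ∑ q ∈ R.pi (fun u => parts u), F (unionPi R (fun u hu => q u hu))
      = ∑ Q ∈ (parts t).filter (fun Q => ∀ s ∈ Q, ∃ u ∈ R, s ⊆ u), F Q := by
  apply Finset.sum_nbij' (i := fun q => unionPi R (fun u hu => q u hu))
    (j := fun Q => fun u _ => Q.filter (· ⊆ u))
  · intro q hq
    have hq' := Finset.mem_pi.1 hq
    refine Finset.mem_filter.2 ⟨unionPi_mem_parts hR hq', ?_⟩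
    intro s hs
    obtain ⟨u, hu, hsq⟩ := mem_unionPi.1 hs
    exact ⟨u, hu, parts_subset (hq' u hu) hsq⟩
  · intro Q hQmem
    obtain ⟨hQp, href⟩ := Finset.mem_filter.1 hQmem
    exact Finset.mem_pi.2 fun u hu => filter_mem_parts hQp hR href hu
  · intro q hq
    have hq' := Finset.mem_pi.1 hq
    funext u hu
    exact unionPi_filter hR hq' hu
  · intro Q hQmem
    obtain ⟨hQp, href⟩ := Finset.mem_filter.1 hQmem
    apply Finset.Subset.antisymm
    · intro s hs
      obtain ⟨u, hu, hsq⟩ := mem_unionPi.1 hs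
      exact (Finset.mem_filter.1 hsq).1
    · intro s hs
      obtain ⟨u, hu, hsu⟩ := href s hs
      exact mem_unionPi.2 ⟨u, hu, Finset.mem_filter.2 ⟨hs, hsu⟩⟩
  · intro q hq
    rfl

end refine

noncomputable def cumulF {Rc S : Type*} [CommRing Rc] [CommRing S]
    (f : Rc → S) (a : α → Rc) (t : Finset α) : S :=
  ∑ P ∈ parts t,
    ((-1 : ℤ) ^ (P.card - 1) * ((P.card - 1).factorial : ℤ)) • ∏ s ∈ P, f (∏ i ∈ s, a i)

lemma cumulF_eq {Rc S : Type*} [CommRing Rc] [CommRing S] (f : Rc → S) (a : α → Rc)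
    (t : Finset α) :
    cumulF f a t = ∑ P ∈ parts t, (cf P.card : S) * ∏ s ∈ P, f (∏ i ∈ s, a i) := by
  apply Finset.sum_congr rfl
  intro P _
  rw [zsmul_eq_mul, cf]

lemma moment {Rc S : Type*} [CommRing Rc] [CommRing S] (f : Rc → S) (a : α → Rc)
    {t : Finset α} (ht : t.Nonempty) :
    ∑ P ∈ parts t, ∏ s ∈ P, cumulF f a s = f (∏ i ∈ t, a i) := by
  have stepA : ∀ R ∈ parts t, ∏ u ∈ R, cumulF f a u
      = ∑ Q ∈ (parts t).filter (fun Q => ∀ s ∈ Q, ∃ u ∈ R, s ⊆ u),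
          (∏ u ∈ R, (cf (Q.filter (· ⊆ u)).card : S)) * ∏ s ∈ Q, f (∏ i ∈ s, a i) := by
    intro R hR
    rw [Finset.prod_congr rfl (fun u _ => cumulF_eq f a u), Finset.prod_sum]
    rw [← refine_bij hR (F := fun Q =>
      (∏ u ∈ R, (cf (Q.filter (· ⊆ u)).card : S)) * ∏ s ∈ Q, f (∏ i ∈ s, a i))]
    apply Finset.sum_congr rfl
    intro q hq
    have hq' := Finset.mem_pi.1 hq
    rw [Finset.prod_mul_distrib]
    congr 1
    · rw [← Finset.prod_attach R
        (fun u => (cf (((unionPi R fun v hv => q v hv).filter (· ⊆ u)).card) : S))]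
      apply Finset.prod_congr rfl
      intro x _
      rw [unionPi_filter hR hq' x.2]
    · rw [unionPi, Finset.prod_biUnion]
      intro x _ y _ hne
      rw [Function.onFun, Finset.disjoint_left]
      intro s hsx hsy
      have hxy : x.1 ≠ y.1 := fun h => hne (Subtype.ext h)
      have hd := parts_disj hR x.2 y.2 hxy
      obtain ⟨z, hz⟩ := parts_nonempty (hq' x.1 x.2) s hsx
      have : z ∈ x.1 ∩ y.1 := Finset.mem_inter.2
        ⟨parts_subset (hq' x.1 x.2) hsx hz, parts_subset (hq' y.1 y.2) hsy hz⟩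
      simp_all
  rw [Finset.sum_congr rfl stepA]
  have hswap : ∀ (R Q : Finset (Finset α)),
      R ∈ parts t ∧ Q ∈ (parts t).filter (fun Q => ∀ s ∈ Q, ∃ u ∈ R, s ⊆ u)
      ↔ R ∈ (parts t).filter (fun R => ∀ s ∈ Q, ∃ u ∈ R, s ⊆ u) ∧ Q ∈ parts t := by
    intro R Q
    simp only [Finset.mem_filter]
    constructor
    · rintro ⟨h1, h2, h3⟩; exact ⟨⟨h1, h3⟩, h2⟩
    · rintro ⟨⟨h1, h3⟩, h2⟩; exact ⟨h1, h2, h3⟩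
  rw [Finset.sum_comm' hswap]
  have stepB : ∀ Q ∈ parts t,
      ∑ R ∈ (parts t).filter (fun R => ∀ s ∈ Q, ∃ u ∈ R, s ⊆ u),
        (∏ u ∈ R, (cf (Q.filter (· ⊆ u)).card : S)) * ∏ s ∈ Q, f (∏ i ∈ s, a i)
      = (if Q.card = 1 then 1 else 0) * ∏ s ∈ Q, f (∏ i ∈ s, a i) := by
    intro Q hQ
    rw [← Finset.sum_mul]
    congr 1
    rw [← coarsen_bij hQ (F := fun R => ∏ u ∈ R, (cf (Q.filter (· ⊆ u)).card : S))]
    have : ∀ P' ∈ parts Q, ∏ u ∈ P'.image (fun B => B.sup id),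
        (cf (Q.filter (· ⊆ u)).card : S) = ∏ B ∈ P', (cf B.card : S) := by
      intro P' hP'
      rw [Finset.prod_image (fun B hB B' hB' h => sup_inj_on hQ hP' hB hB' h)]
      apply Finset.prod_congr rfl
      intro B hB
      rw [filter_sup_eq hQ hP' hB]
    rw [Finset.sum_congr rfl this]
    have hcast : ∑ P' ∈ parts Q, ∏ B ∈ P', (cf B.card : S)
        = ((∑ P' ∈ parts Q, ∏ B ∈ P', cf B.card : ℤ) : S) := by
      push_cast
      rfl
    rw [hcast, core_identity Q.card Q rfl (parts_ne_empty ht hQ)]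
    split <;> simp
  rw [Finset.sum_congr rfl stepB]
  have hfilt : ∀ Q ∈ parts t, (if Q.card = 1 then (1 : S) else 0) * ∏ s ∈ Q, f (∏ i ∈ s, a i)
      = if Q = {t} then ∏ s ∈ Q, f (∏ i ∈ s, a i) else 0 := by
    intro Q hQ
    by_cases h : Q.card = 1
    · rw [if_pos h, one_mul, if_pos (parts_card_one ht hQ h)]
    · rw [if_neg h, zero_mul, if_neg]
      intro hQt
      subst hQt
      simp at h
  rw [Finset.sum_congr rfl hfilt, Finset.sum_ite_eq' (parts t) {t}
    (fun Q => ∏ s ∈ Q, f (∏ i ∈ s, a i)), if_pos (singleton_mem_parts ht)]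
  simp

section mapsec
variable {β : Type*} [DecidableEq β]

lemma map_preimage_eq {e : β ↪ α} {t : Finset β} {s : Finset α} (hs : s ⊆ t.map e) :
    (s.preimage e (e.injective.injOn)).map e = s := by
  ext y
  simp only [Finset.mem_map, Finset.mem_preimage]
  constructor
  · rintro ⟨x, hx, rfl⟩; exact hx
  · intro hy
    obtain ⟨x, _, rfl⟩ := Finset.mem_map.1 (hs hy)
    exact ⟨x, hy, rfl⟩

lemma parts_map {e : β ↪ α} {t : Finset β} :
    parts (t.map e) = (parts t).image (fun P => P.image (fun s => s.map e)) := by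
  ext P'
  simp only [Finset.mem_image]
  constructor
  · intro hP'
    refine ⟨P'.image (fun s => s.preimage e (e.injective.injOn)), ?_, ?_⟩
    · rw [mem_parts]
      have hback : ∀ s ∈ P', (s.preimage e (e.injective.injOn)).map e = s :=
        fun s hs => map_preimage_eq (parts_subset hP' hs)
      refine ⟨?_, ?_, ?_⟩
      · intro s hs
        obtain ⟨s', hs', rfl⟩ := Finset.mem_image.1 hs
        obtain ⟨x, hx⟩ := parts_nonempty hP' s' hs'
        obtain ⟨y, _, rfl⟩ := Finset.mem_map.1 (parts_subset hP' hs' hx)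
        exact ⟨y, Finset.mem_preimage.2 (by simpa using hx)⟩
      · intro s hs u hu hne
        obtain ⟨s', hs', rfl⟩ := Finset.mem_image.1 hs
        obtain ⟨u', hu', rfl⟩ := Finset.mem_image.1 hu
        have hne' : s' ≠ u' := fun h => hne (h ▸ rfl)
        have hd := parts_disj hP' hs' hu' hne'
        rw [Finset.eq_empty_iff_forall_notMem]
        intro y hy
        obtain ⟨h1, h2⟩ := Finset.mem_inter.1 hy
        have : e y ∈ s' ∩ u' := Finset.mem_inter.2
          ⟨Finset.mem_preimage.1 h1, Finset.mem_preimage.1 h2⟩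
        simp_all
      · apply Finset.Subset.antisymm
        · intro y hy
          obtain ⟨s, hs, hys⟩ := Finset.mem_sup.1 hy
          obtain ⟨s', hs', rfl⟩ := Finset.mem_image.1 hs
          have : e y ∈ s' := Finset.mem_preimage.1 hys
          have := parts_subset hP' hs' this
          exact (Finset.mem_map' e).1 this
        · intro y hy
          have : e y ∈ t.map e := (Finset.mem_map' e).2 hy
          rw [← parts_sup hP'] at this
          obtain ⟨s', hs', hys⟩ := Finset.mem_sup.1 this
          exact Finset.mem_sup.2 ⟨s'.preimage e (e.injective.injOn),
            Finset.mem_image_of_mem _ hs', Finset.mem_preimage.2 hys⟩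
    · rw [Finset.image_image]
      have : ∀ s ∈ P', ((fun s => Finset.map e s) ∘ fun s => s.preimage e (e.injective.injOn)) s
          = id s := fun s hs => map_preimage_eq (parts_subset hP' hs)
      rw [Finset.image_congr this, Finset.image_id]
  · rintro ⟨P, hP, rfl⟩
    rw [mem_parts]
    refine ⟨?_, ?_, ?_⟩
    · intro s hs
      obtain ⟨s', hs', rfl⟩ := Finset.mem_image.1 hs
      obtain ⟨x, hx⟩ := parts_nonempty hP s' hs'
      exact ⟨e x, (Finset.mem_map' e).2 hx⟩
    · intro s hs u hu hne
      obtain ⟨s', hs', rfl⟩ := Finset.mem_image.1 hs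
      obtain ⟨u', hu', rfl⟩ := Finset.mem_image.1 hu
      have hne' : s' ≠ u' := fun h => hne (h ▸ rfl)
      rw [← Finset.map_inter, parts_disj hP hs' hu' hne']
      rfl
    · apply Finset.Subset.antisymm
      · intro y hy
        obtain ⟨s, hs, hys⟩ := Finset.mem_sup.1 hy
        obtain ⟨s', hs', rfl⟩ := Finset.mem_image.1 hs
        obtain ⟨x, hx, rfl⟩ := Finset.mem_map.1 hys
        exact (Finset.mem_map' e).2 (parts_subset hP hs' hx)
      · intro y hy
        obtain ⟨x, hx, rfl⟩ := Finset.mem_map.1 hy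
        obtain ⟨s', hs', hxs'⟩ := mem_sup_parts hP hx
        exact Finset.mem_sup.2 ⟨s'.map e, Finset.mem_image_of_mem _ hs',
          (Finset.mem_map' e).2 hxs'⟩

lemma cumulF_map {Rc S : Type*} [CommRing Rc] [CommRing S] (f : Rc → S) (a : α → Rc)
    (e : β ↪ α) (t : Finset β) :
    cumulF f a (t.map e) = cumulF f (fun i => a (e i)) t := by
  rw [cumulF_eq, cumulF_eq, parts_map]
  rw [Finset.sum_image (f := fun P => (cf P.card : S) * ∏ s ∈ P, f (∏ i ∈ s, a i))
    (fun P hP P' hP' h => Finset.image_injective (Finset.map_injective e) h)]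
  apply Finset.sum_congr rfl
  intro P hP
  congr 1
  · rw [Finset.card_image_of_injective _ (Finset.map_injective e)]
  · rw [Finset.prod_image (fun s hs s' hs' h => Finset.map_injective e h)]
    apply Finset.prod_congr rfl
    intro s hs
    congr 1
    rw [Finset.prod_map]

end mapsec

end PartsMachinery

/-- The set of partitions of `{0,…,n-1}` into nonempty, pairwise disjoint blocks. -/
def partitionsOf (n : ℕ) : Finset (Finset (Finset (Fin n))) :=
  ((Finset.univ : Finset (Fin n)).powerset.powerset).filter fun P =>
    (∀ s ∈ P, s.Nonempty) ∧ (∀ s ∈ P, ∀ t ∈ P, s ≠ t → s ∩ t = ∅) ∧ P.sup id = Finset.univ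

/-- The `n`-th cumulant of a map `f` between commutative rings. -/
noncomputable def cumul {R S : Type*} [CommRing R] [CommRing S]
    (f : R → S) (n : ℕ) (a : Fin n → R) : S :=
  ∑ P ∈ partitionsOf n,
    ((-1 : ℤ) ^ (P.card - 1) * ((P.card - 1).factorial : ℤ)) • ∏ s ∈ P, f (∏ i ∈ s, a i)

/-- Restriction of a family `a` to a finite subset `s` of its index set. -/
noncomputable def restr {α β : Type*} (a : α → β) (s : Finset α) : Fin s.card → β :=
  fun i => a (s.equivFin.symm i).1

lemma partitionsOf_eq (n : ℕ) : partitionsOf n = parts Finset.univ := by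
  unfold partitionsOf parts
  congr 1

lemma cumul_eq_cumulF {Rc S : Type*} [CommRing Rc] [CommRing S] (f : Rc → S) (n : ℕ)
    (a : Fin n → Rc) : cumul f n a = cumulF f a Finset.univ := by
  unfold cumul cumulF
  rw [partitionsOf_eq]

lemma cumul_restr {α : Type*} [DecidableEq α] {Rc S : Type*} [CommRing Rc] [CommRing S]
    (f : Rc → S) (a : α → Rc) (s : Finset α) :
    cumul f s.card (restr a s) = cumulF f a s := by
  rw [cumul_eq_cumulF]
  let e : Fin s.card ↪ α :=
    ⟨fun i => (s.equivFin.symm i).1, fun i j h => s.equivFin.symm.injective (Subtype.ext h)⟩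
  have hmap : Finset.univ.map e = s := by
    ext x
    simp only [Finset.mem_map, Finset.mem_univ, true_and]
    constructor
    · rintro ⟨i, rfl⟩
      exact (s.equivFin.symm i).2
    · intro hx
      exact ⟨s.equivFin ⟨x, hx⟩, by show (s.equivFin.symm (s.equivFin ⟨x, hx⟩)).1 = x; simp⟩
  have hres : restr a s = fun i => a (e i) := rfl
  rw [hres, ← cumulF_map f a e Finset.univ, hmap]

/-- cumulants of a composite:
`κ(g∘f)_n(a_1,…,a_n) = Σ_{partitions {I_1,…,I_k}} κ(g)_k(κ(f)_{|I_1|}(…),…,κ(f)_{|I_k|}(…))`. -/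
theorem cumulant_comp (K A B C : Type*) [Field K] [CharZero K]
    [CommRing A] [Algebra K A] [CommRing B] [Algebra K B] [CommRing C] [Algebra K C]
    (f : A →ₗ[K] B) (g : B →ₗ[K] C) (hf : f 1 = 1) (hg : g 1 = 1) :
    ∀ (n : ℕ), 1 ≤ n → ∀ a : Fin n → A,
      cumul (⇑g ∘ ⇑f) n a =
        ∑ P ∈ partitionsOf n,
          cumul (⇑g) P.card fun j =>
            cumul (⇑f) ((P.equivFin.symm j).1.card) (restr a (P.equivFin.symm j).1) := by
  intro n hn a
  rw [cumul_eq_cumulF, partitionsOf_eq]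
  set t : Finset (Fin n) := Finset.univ with ht
  have houter : ∀ P ∈ parts t,
      (cumul (⇑g) P.card fun j =>
        cumul (⇑f) ((P.equivFin.symm j).1.card) (restr a (P.equivFin.symm j).1))
      = cumulF (⇑g) (fun s => cumulF (⇑f) a s) P := by
    intro P _
    have h1 : (fun j => cumul (⇑f) ((P.equivFin.symm j).1.card) (restr a (P.equivFin.symm j).1))
        = restr (fun s => cumulF (⇑f) a s) P := by
      funext j
      exact cumul_restr (⇑f) a _
    rw [h1, cumul_restr]
  rw [Finset.sum_congr rfl houter]
  -- expand the outer cumulant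
  have hexp : ∀ P ∈ parts t, cumulF (⇑g) (fun s => cumulF (⇑f) a s) P
      = ∑ R ∈ (parts t).filter (fun R => ∀ s ∈ P, ∃ u ∈ R, s ⊆ u),
          (cf R.card : C) * ∏ u ∈ R, g (∏ s ∈ P.filter (· ⊆ u), cumulF (⇑f) a s) := by
    intro P hP
    rw [cumulF_eq]
    have hc : ∀ P' ∈ parts P, (cf P'.card : C) * ∏ s ∈ P', g (∏ i ∈ s, cumulF (⇑f) a i)
        = (fun R => (cf R.card : C) * ∏ u ∈ R, g (∏ s ∈ P.filter (· ⊆ u), cumulF (⇑f) a s))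
            (P'.image (fun B => B.sup id)) := by
      intro P' hP'
      simp only
      congr 1
      · congr 1
        rw [Finset.card_image_of_injOn (fun B hB B' hB' h => sup_inj_on hP hP' hB hB' h)]
      · rw [Finset.prod_image (fun B hB B' hB' h => sup_inj_on hP hP' hB hB' h)]
        apply Finset.prod_congr rfl
        intro B hB
        rw [filter_sup_eq hP hP' hB]
    rw [Finset.sum_congr rfl hc]
    convert coarsen_bij hP (fun R =>
      (cf R.card : C) * ∏ u ∈ R, g (∏ s ∈ P.filter (· ⊆ u), cumulF (⇑f) a s)) using 2
    exact (Finset.filter_congr_decidable _ _ _).trans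
      (Finset.filter_congr_decidable _ _ _).symm
  rw [Finset.sum_congr rfl hexp]
  have hswap : ∀ (P R : Finset (Finset (Fin n))),
      P ∈ parts t ∧ R ∈ (parts t).filter (fun R => ∀ s ∈ P, ∃ u ∈ R, s ⊆ u)
      ↔ P ∈ (parts t).filter (fun P => ∀ s ∈ P, ∃ u ∈ R, s ⊆ u) ∧ R ∈ parts t := by
    intro P R
    simp only [Finset.mem_filter]
    constructor
    · rintro ⟨h1, h2, h3⟩; exact ⟨⟨h1, h3⟩, h2⟩
    · rintro ⟨⟨h1, h3⟩, h2⟩; exact ⟨h1, h2, h3⟩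
  rw [Finset.sum_comm' hswap]
  have hinner : ∀ R ∈ parts t,
      ∑ P ∈ (parts t).filter (fun P => ∀ s ∈ P, ∃ u ∈ R, s ⊆ u),
        (cf R.card : C) * ∏ u ∈ R, g (∏ s ∈ P.filter (· ⊆ u), cumulF (⇑f) a s)
      = (cf R.card : C) * ∏ u ∈ R, g (f (∏ i ∈ u, a i)) := by
    intro R hR
    have h0 : ∑ P ∈ (parts t).filter (fun P => ∀ s ∈ P, ∃ u ∈ R, s ⊆ u),
        (cf R.card : C) * ∏ u ∈ R, g (∏ s ∈ P.filter (· ⊆ u), cumulF (⇑f) a s)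
        = ∑ q ∈ R.pi (fun u => parts u), (cf R.card : C) *
            ∏ u ∈ R, g (∏ s ∈ (unionPi R (fun v hv => q v hv)).filter (· ⊆ u), cumulF (⇑f) a s) := by
      convert (refine_bij hR (F := fun Q =>
        (cf R.card : C) * ∏ u ∈ R, g (∏ s ∈ Q.filter (· ⊆ u), cumulF (⇑f) a s))).symm using 2
      exact (Finset.filter_congr_decidable _ _ _).trans
        (Finset.filter_congr_decidable _ _ _).symm
    rw [h0]
    rw [← Finset.mul_sum]
    congr 1
    have h1 : ∀ q ∈ R.pi (fun u => parts u),
        ∏ u ∈ R, g (∏ s ∈ (unionPi R (fun v hv => q v hv)).filter (· ⊆ u), cumulF (⇑f) a s)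
        = ∏ x ∈ R.attach, g (∏ s ∈ q x.1 x.2, cumulF (⇑f) a s) := by
      intro q hq
      rw [← Finset.prod_attach R (fun u =>
        g (∏ s ∈ (unionPi R (fun v hv => q v hv)).filter (· ⊆ u), cumulF (⇑f) a s))]
      apply Finset.prod_congr rfl
      intro x _
      rw [unionPi_filter hR (Finset.mem_pi.1 hq) x.2]
    rw [Finset.sum_congr rfl h1]
    have h2 : ∏ u ∈ R, (∑ Q ∈ parts u, g (∏ s ∈ Q, cumulF (⇑f) a s))
        = ∑ q ∈ R.pi (fun u => parts u), ∏ x ∈ R.attach, g (∏ s ∈ q x.1 x.2, cumulF (⇑f) a s) :=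
      Finset.prod_sum R (fun u => parts u) (fun u Q => g (∏ s ∈ Q, cumulF (⇑f) a s))
    refine Eq.trans h2.symm ?_
    apply Finset.prod_congr rfl
    intro u hu
    rw [← map_sum]
    congr 1
    exact moment (⇑f) a (parts_nonempty hR u hu)
  rw [Finset.sum_congr rfl hinner, cumulF_eq]
  rfl
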